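/- arXiv:1204.3693 — 2 statements merged into one kernel-verified Lean document; each statement's English description precedes it below -/
import Mathlib

section
/- Let g ∈ Sp(V). Define Z : V_ℂ → V_ℂ (complex-linear) by Z(v₊) = (C_g⁻¹v)₋ + (Z_{g⁻¹}v)₊ and Z(v₋) = (C_{g⁻¹}⁻¹v)₊ + (Z_g v)₋ for v ∈ V. Then the Gaussian u_g = e^Z ∈ SV_ℂ' is the kernel of a nonzero linear map U_g : SV → SV' satisfying the intertwining relations U_g∘c(v) = (c(C_g v) + a(A_g v))∘U_g and U_g∘a(v) = (c(A_g v) + a(C_g v))∘U_g for all v ∈ V. -/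
open scoped ComplexConjugate

noncomputable section

section Defs

variable {V W A : Type} [AddCommGroup V] [Module ℂ V] [CommRing A] [Algebra ℂ A]

/-- `A` (with embedding `ι`) is the symmetric algebra of `V`: universal property. -/
def IsSymmAlg (ι : V →ₗ[ℂ] A) : Prop :=
  ∀ (B : Type) [CommRing B] [Algebra ℂ B] (f : V →ₗ[ℂ] B),
    ∃! F : A →ₐ[ℂ] B, ∀ v, F (ι v) = f v

/-- The span of `n`-fold products of generators: the degree-`n` part. -/
def GradeOf (gen : W → A) (n : ℕ) : Submodule ℂ A :=
  Submodule.span ℂ {a | ∃ f : Fin n → W, a = ∏ i, gen (f i)}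

/-- The algebra is spanned by products of generators. -/
def SpanProdsOf (gen : W → A) : Prop :=
  ∀ x : A, x ∈ Submodule.span ℂ {a | ∃ (n : ℕ) (f : Fin n → W), a = ∏ i, gen (f i)}

/-- A quadratic: an antilinear functional concentrated in degree 2. -/
def IsQuadOf (gen : W → A) (ζ : A →ₗ⋆[ℂ] ℂ) : Prop :=
  ∀ n : ℕ, n ≠ 2 → ∀ φ ∈ GradeOf gen n, ζ φ = 0

/-- The commutative product on the full antidual induced by the coproduct,
characterized on products of generators. -/
def IsConvProdOf (gen : W → A)
    (mul : (A →ₗ⋆[ℂ] ℂ) → (A →ₗ⋆[ℂ] ℂ) → (A →ₗ⋆[ℂ] ℂ)) : Prop :=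
  ∀ (Φ Ψ : A →ₗ⋆[ℂ] ℂ) (n : ℕ) (v : Fin n → W),
    mul Φ Ψ (∏ i, gen (v i)) =
      ∑ S : Finset (Fin n), Φ (∏ i ∈ S, gen (v i)) * Ψ (∏ i ∈ Sᶜ, gen (v i))

/-- The counit (unit of the antidual algebra): kills products of at least one generator. -/
def IsCounitOf (gen : W → A) (ε : A →ₗ⋆[ℂ] ℂ) : Prop :=
  ∀ (n : ℕ) (v : Fin n → W), ε (∏ i, gen (v i)) = if n = 0 then 1 else 0

/-- Powers of a functional with respect to the convolution product. -/
def powD (mul : (A →ₗ⋆[ℂ] ℂ) → (A →ₗ⋆[ℂ] ℂ) → (A →ₗ⋆[ℂ] ℂ))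
    (ε ζ : A →ₗ⋆[ℂ] ℂ) : ℕ → (A →ₗ⋆[ℂ] ℂ)
  | 0 => ε
  | n + 1 => mul ζ (powD mul ε ζ n)

/-- `E` is the Gaussian `exp ζ = Σ ζⁿ/n!` (a finite sum in each degree). -/
def IsGaussianOf (gen : W → A)
    (mul : (A →ₗ⋆[ℂ] ℂ) → (A →ₗ⋆[ℂ] ℂ) → (A →ₗ⋆[ℂ] ℂ))
    (ε ζ E : A →ₗ⋆[ℂ] ℂ) : Prop :=
  ∀ k : ℕ, ∀ ψ ∈ GradeOf gen k,
    E ψ = ∑ n ∈ Finset.range (k + 1), ((n.factorial : ℂ))⁻¹ * powD mul ε ζ n ψ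

end Defs

section Defs2

variable {V A : Type} [NormedAddCommGroup V] [InnerProductSpace ℂ V]
  [CommRing A] [Algebra ℂ A]

/-- The family of annihilation operators: derivations killing `1` with
`a v (ι w) = ⟨v|w⟩ 1`. -/
def IsAnn (ι : V →ₗ[ℂ] A) (a : V → A →ₗ[ℂ] A) : Prop :=
  ∀ v : V, (∀ x y : A, a v (x * y) = a v x * y + x * a v y) ∧
    a v 1 = 0 ∧ ∀ w : V, a v (ι w) = (inner ℂ v w : ℂ) • (1 : A)

/-- The canonical inner product on the symmetric algebra: graded pieces are
orthogonal and the permanent formula holds. (Antilinear in the first slot.) -/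
def IsCanonInner (ι : V →ₗ[ℂ] A) (Bf : A →ₗ⋆[ℂ] A →ₗ[ℂ] ℂ) : Prop :=
  (∀ (k n : ℕ), k ≠ n → ∀ (x : Fin k → V) (y : Fin n → V),
      Bf (∏ i, ι (x i)) (∏ i, ι (y i)) = 0) ∧
  ∀ (n : ℕ) (x y : Fin n → V),
      Bf (∏ i, ι (x i)) (∏ i, ι (y i)) =
        ∑ p : Equiv.Perm (Fin n), ∏ i, (inner ℂ (x i) (y (p i)) : ℂ)

/-- Iterated annihilation `a(vₙ)⋯a(v₁)φ` (applying `a(v₁)` first). -/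
def iterAnn (a : V → A →ₗ[ℂ] A) : (n : ℕ) → (Fin n → V) → A → A
  | 0, _, φ => φ
  | n + 1, v, φ => a (v (Fin.last n)) (iterAnn a n (fun i => v i.castSucc) φ)

/-- A symmetric bi-antilinear map `V × V → ℂ`. -/
def IsSymAnti (Z : V → V → ℂ) : Prop :=
  (∀ x y, Z x y = Z y x) ∧
  (∀ x y y', Z x (y + y') = Z x y + Z x y') ∧
  (∀ (c : ℂ) (x y : V), Z x (c • y) = conj c * Z x y)

end Defs2

section DefsC

variable {A AC : Type} [CommRing A] [Algebra ℂ A] [CommRing AC] [Algebra ℂ AC]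

/-- An antilinear (conjugate-linear) algebra morphism, such as `φ ↦ φ₋`. -/
def IsAntiAlgHom (m : A → AC) : Prop :=
  (∀ x y : A, m (x + y) = m x + m y) ∧ (∀ (c : ℂ) (x : A), m (c • x) = conj c • m x) ∧
  (∀ x y : A, m (x * y) = m x * m y) ∧ m 1 = 1

end DefsC

section Wick
set_option linter.unusedSectionVars false

open Finset

variable {W AC : Type} [CommRing AC] [Algebra ℂ AC]

lemma prod_finset_eq_fin {κ : Type} (s : Finset κ) (F : κ → AC) :
    ∏ i ∈ s, F i = ∏ j : Fin s.card, F (s.equivFin.symm j) := by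
  rw [← Finset.prod_coe_sort s F]
  exact (Equiv.prod_comp s.equivFin.symm (fun x : s => F x)).symm

lemma gradeOf_prod (gen : W → AC) {κ : Type} (v : κ → W) (s : Finset κ) :
    (∏ i ∈ s, gen (v i)) ∈ GradeOf gen s.card := by
  rw [prod_finset_eq_fin s (fun i => gen (v i))]
  exact Submodule.subset_span ⟨fun j => v (s.equivFin.symm j), rfl⟩

lemma counit_prod (gen : W → AC) (εC : AC →ₗ⋆[ℂ] ℂ) (hεC : IsCounitOf gen εC)
    {κ : Type} (v : κ → W) (s : Finset κ) :
    εC (∏ i ∈ s, gen (v i)) = if s.card = 0 then 1 else 0 := by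
  rw [prod_finset_eq_fin s (fun i => gen (v i))]
  exact hεC s.card (fun j => v (s.equivFin.symm j))


lemma quad_prod (gen : W → AC) (ζZ : AC →ₗ⋆[ℂ] ℂ) (hζq : IsQuadOf gen ζZ)
    {κ : Type} (v : κ → W) (s : Finset κ) (hs : s.card ≠ 2) :
    ζZ (∏ i ∈ s, gen (v i)) = 0 :=
  hζq s.card hs _ (gradeOf_prod gen v s)

lemma mul_expand (gen : W → AC)
    (mulC : (AC →ₗ⋆[ℂ] ℂ) → (AC →ₗ⋆[ℂ] ℂ) → (AC →ₗ⋆[ℂ] ℂ))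
    (hmulC : IsConvProdOf gen mulC) (Φ Ψ : AC →ₗ⋆[ℂ] ℂ)
    {κ : Type} [DecidableEq κ] (v : κ → W) (s : Finset κ) :
    mulC Φ Ψ (∏ i ∈ s, gen (v i)) =
      ∑ t ∈ s.powerset, Φ (∏ i ∈ t, gen (v i)) * Ψ (∏ i ∈ s \ t, gen (v i)) := by
  classical
  set n := s.card with hn
  set e := s.equivFin with he
  have hembinj : Function.Injective (fun j : Fin n => (e.symm j : κ)) := by
    intro a b h
    exact e.symm.injective (Subtype.coe_injective h)
  set emb : Fin n ↪ κ := ⟨fun j => (e.symm j : κ), hembinj⟩ with hemb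
  have hmapsub : ∀ S : Finset (Fin n), S.map emb ⊆ s := by
    intro S x hx
    rcases Finset.mem_map.1 hx with ⟨j, _, rfl⟩
    exact (e.symm j).2
  have hcompl : ∀ S : Finset (Fin n), s \ S.map emb = Sᶜ.map emb := by
    intro S
    ext x
    simp only [Finset.mem_sdiff, Finset.mem_map, Finset.mem_compl, hemb,
      Function.Embedding.coeFn_mk]
    constructor
    · rintro ⟨hxs, hnot⟩
      refine ⟨e ⟨x, hxs⟩, ?_, by simp⟩
      intro hmem
      exact hnot ⟨e ⟨x, hxs⟩, hmem, by simp⟩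
    · rintro ⟨j, hj, rfl⟩
      exact ⟨(e.symm j).2, fun ⟨j', _, hj'⟩ => by
        cases hembinj hj'; exact hj ‹_›⟩
  rw [prod_finset_eq_fin s (fun i => gen (v i))]
  rw [hmulC Φ Ψ n (fun j => v (e.symm j))]
  refine Finset.sum_bij (fun S _ => S.map emb) (fun S _ => Finset.mem_powerset.2 (hmapsub S))
    (fun S₁ _ S₂ _ h => Finset.map_injective emb h) ?_ ?_
  · intro t ht
    refine ⟨Finset.univ.filter (fun j => (e.symm j : κ) ∈ t), Finset.mem_univ _, ?_⟩
    ext x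
    simp only [Finset.mem_map, Finset.mem_filter, Finset.mem_univ, true_and, hemb,
      Function.Embedding.coeFn_mk]
    constructor
    · rintro ⟨j, hj, rfl⟩; exact hj
    · intro hx
      exact ⟨e ⟨x, Finset.mem_powerset.1 ht hx⟩, by simpa using hx, by simp⟩
  · intro S _
    rw [Finset.prod_map S emb (fun i => gen (v i)), hcompl S,
      Finset.prod_map Sᶜ emb (fun i => gen (v i))]
    rfl

variable (gen : W → AC)
    (mulC : (AC →ₗ⋆[ℂ] ℂ) → (AC →ₗ⋆[ℂ] ℂ) → (AC →ₗ⋆[ℂ] ℂ))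
    (εC ζZ : AC →ₗ⋆[ℂ] ℂ)

/-- power expansion restricted to 2-element subsets -/
lemma pow_expand (hmulC : IsConvProdOf gen mulC) (hζq : IsQuadOf gen ζZ)
    {κ : Type} [DecidableEq κ] (v : κ → W) (s : Finset κ) (k : ℕ) :
    powD mulC εC ζZ (k + 1) (∏ i ∈ s, gen (v i)) =
      ∑ t ∈ s.powersetCard 2, ζZ (∏ i ∈ t, gen (v i)) *
        powD mulC εC ζZ k (∏ i ∈ s \ t, gen (v i)) := by
  show mulC ζZ (powD mulC εC ζZ k) _ = _
  rw [mul_expand gen mulC hmulC _ _ v s]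
  rw [Finset.powersetCard_eq_filter, Finset.sum_filter]
  refine Finset.sum_congr rfl ?_
  intro t _
  by_cases h : t.card = 2
  · simp [h]
  · simp [h, quad_prod gen ζZ hζq v t h]

/-- powers vanish off the right grade -/
lemma pow_vanish (hmulC : IsConvProdOf gen mulC) (hζq : IsQuadOf gen ζZ)
    (hεC : IsCounitOf gen εC)
    {κ : Type} [DecidableEq κ] (k : ℕ) (v : κ → W) (s : Finset κ)
    (h : s.card ≠ 2 * k) :
    powD mulC εC ζZ k (∏ i ∈ s, gen (v i)) = 0 := by
  induction k generalizing s with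
  | zero =>
      show εC _ = 0
      rw [counit_prod gen εC hεC v s, if_neg (by simpa using h)]
  | succ k ih =>
      rw [pow_expand gen mulC εC ζZ hmulC hζq v s k]
      refine Finset.sum_eq_zero ?_
      intro t ht
      rw [Finset.mem_powersetCard] at ht
      rw [ih (s \ t) ?_, mul_zero]
      rw [Finset.card_sdiff_of_subset ht.1, ht.2]
      intro hc
      apply h
      have h2 : 2 ≤ s.card := ht.2 ▸ Finset.card_le_card ht.1
      omega

lemma sdiff_pair {κ : Type} [DecidableEq κ] (s : Finset κ) (a j : κ) :
    s \ {a, j} = (s.erase a).erase j := by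
  ext x
  simp only [Finset.mem_sdiff, Finset.mem_insert, Finset.mem_singleton, Finset.mem_erase]
  tauto

lemma sum_pairs_with {M κ : Type} [AddCommMonoid M] [DecidableEq κ]
    (s : Finset κ) {a : κ} (ha : a ∈ s) (F : Finset κ → M) :
    ∑ t ∈ (s.powersetCard 2).filter (fun t => a ∈ t), F t = ∑ j ∈ s.erase a, F {a, j} := by
  refine (Finset.sum_bij (fun j _ => ({a, j} : Finset κ)) ?_ ?_ ?_ ?_).symm
  · intro j hj
    rw [Finset.mem_erase] at hj
    rw [Finset.mem_filter, Finset.mem_powersetCard]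
    refine ⟨⟨?_, ?_⟩, Finset.mem_insert_self a _⟩
    · intro x hx
      rcases Finset.mem_insert.1 hx with rfl | hx
      · exact ha
      · rw [Finset.mem_singleton] at hx; exact hx ▸ hj.2
    · rw [Finset.card_insert_of_notMem (by simp [Ne.symm hj.1]), Finset.card_singleton]
  · intro j₁ hj₁ j₂ hj₂ h
    rw [Finset.mem_erase] at hj₁
    have h2 : j₁ ∈ ({a, j₂} : Finset κ) := by
      rw [show ({a, j₂} : Finset κ) = {a, j₁} from h.symm]; simp
    rcases Finset.mem_insert.1 h2 with rfl | h3
    · exact absurd rfl hj₁.1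
    · exact Finset.mem_singleton.1 h3
  · intro t ht
    rw [Finset.mem_filter, Finset.mem_powersetCard] at ht
    obtain ⟨⟨hsub, hcard⟩, hat⟩ := ht
    have h1 : (t.erase a).card = 1 := by
      rw [Finset.card_erase_of_mem hat, hcard]
    obtain ⟨j, hj⟩ := Finset.card_eq_one.1 h1
    have hjmem : j ∈ t.erase a := by rw [hj]; exact Finset.mem_singleton_self j
    rw [Finset.mem_erase] at hjmem
    refine ⟨j, Finset.mem_erase.2 ⟨hjmem.1, hsub hjmem.2⟩, ?_⟩
    show ({a, j} : Finset κ) = t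
    rw [← Finset.insert_erase hat, hj]
  · intro j hj
    rfl

lemma pow_wick (hmulC : IsConvProdOf gen mulC) (hζq : IsQuadOf gen ζZ)
    (hεC : IsCounitOf gen εC)
    {κ : Type} [DecidableEq κ] (k : ℕ) (v : κ → W) (s : Finset κ) {a : κ} (ha : a ∈ s) :
    powD mulC εC ζZ (k + 1) (∏ i ∈ s, gen (v i)) =
      ((k : ℂ) + 1) * ∑ j ∈ s.erase a, ζZ (gen (v a) * gen (v j)) *
        powD mulC εC ζZ k (∏ i ∈ (s.erase a).erase j, gen (v i)) := by
  induction k generalizing s with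
  | zero =>
      rw [pow_expand gen mulC εC ζZ hmulC hζq v s 0]
      rw [← Finset.sum_filter_add_sum_filter_not (s.powersetCard 2) (fun t => a ∈ t)]
      have hB : ∑ t ∈ (s.powersetCard 2).filter (fun t => a ∉ t),
          ζZ (∏ i ∈ t, gen (v i)) * powD mulC εC ζZ 0 (∏ i ∈ s \ t, gen (v i)) = 0 := by
        refine Finset.sum_eq_zero ?_
        intro t ht
        rw [Finset.mem_filter, Finset.mem_powersetCard] at ht
        have hmem : a ∈ s \ t := Finset.mem_sdiff.2 ⟨ha, ht.2⟩
        have : (s \ t).card ≠ 0 := Finset.card_ne_zero.2 ⟨a, hmem⟩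
        show _ * εC _ = 0
        rw [counit_prod gen εC hεC v (s \ t), if_neg this, mul_zero]
      rw [hB, add_zero,
        sum_pairs_with s ha (fun t => ζZ (∏ i ∈ t, gen (v i)) *
          powD mulC εC ζZ 0 (∏ i ∈ s \ t, gen (v i)))]
      rw [Nat.cast_zero, zero_add, one_mul]
      refine Finset.sum_congr rfl ?_
      intro j hj
      rw [Finset.mem_erase] at hj
      rw [Finset.prod_pair (Ne.symm hj.1), sdiff_pair]
  | succ k ih =>
      rw [pow_expand gen mulC εC ζZ hmulC hζq v s (k + 1)]
      rw [← Finset.sum_filter_add_sum_filter_not (s.powersetCard 2) (fun t => a ∈ t)]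
      have hA : ∑ t ∈ (s.powersetCard 2).filter (fun t => a ∈ t),
          ζZ (∏ i ∈ t, gen (v i)) * powD mulC εC ζZ (k + 1) (∏ i ∈ s \ t, gen (v i)) =
          ∑ j ∈ s.erase a, ζZ (gen (v a) * gen (v j)) *
            powD mulC εC ζZ (k + 1) (∏ i ∈ (s.erase a).erase j, gen (v i)) := by
        rw [sum_pairs_with s ha (fun t => ζZ (∏ i ∈ t, gen (v i)) *
          powD mulC εC ζZ (k + 1) (∏ i ∈ s \ t, gen (v i)))]
        refine Finset.sum_congr rfl ?_
        intro j hj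
        rw [Finset.mem_erase] at hj
        rw [Finset.prod_pair (Ne.symm hj.1), sdiff_pair]
      have hB : ∑ t ∈ (s.powersetCard 2).filter (fun t => a ∉ t),
          ζZ (∏ i ∈ t, gen (v i)) * powD mulC εC ζZ (k + 1) (∏ i ∈ s \ t, gen (v i)) =
          ((k : ℂ) + 1) * ∑ j ∈ s.erase a, ζZ (gen (v a) * gen (v j)) *
            powD mulC εC ζZ (k + 1) (∏ i ∈ (s.erase a).erase j, gen (v i)) := by
        have step1 : ∀ t ∈ (s.powersetCard 2).filter (fun t => a ∉ t),
            ζZ (∏ i ∈ t, gen (v i)) * powD mulC εC ζZ (k + 1) (∏ i ∈ s \ t, gen (v i)) =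
            ∑ j ∈ (s \ t).erase a, ((k : ℂ) + 1) * (ζZ (gen (v a) * gen (v j)) *
              (ζZ (∏ i ∈ t, gen (v i)) *
               powD mulC εC ζZ k (∏ i ∈ ((s.erase a).erase j) \ t, gen (v i)))) := by
          intro t ht
          rw [Finset.mem_filter, Finset.mem_powersetCard] at ht
          have hmem : a ∈ s \ t := Finset.mem_sdiff.2 ⟨ha, ht.2⟩
          rw [ih (s \ t) hmem, Finset.mul_sum, Finset.mul_sum]
          refine Finset.sum_congr rfl ?_
          intro j hj
          rw [Finset.mem_erase, Finset.mem_sdiff] at hj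
          have hset : ((s \ t).erase a).erase j = ((s.erase a).erase j) \ t := by
            ext x
            simp only [Finset.mem_erase, Finset.mem_sdiff]
            tauto
          rw [hset]
          ring
        rw [Finset.sum_congr rfl step1]
        have hcond : ∀ (t : Finset κ) (j : κ),
            t ∈ (s.powersetCard 2).filter (fun t => a ∉ t) ∧ j ∈ (s \ t).erase a ↔
            t ∈ ((s.erase a).erase j).powersetCard 2 ∧ j ∈ s.erase a := by
          intro t j
          simp only [Finset.mem_filter, Finset.mem_powersetCard, Finset.mem_erase,
            Finset.mem_sdiff, Finset.subset_erase]
          tauto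
        rw [Finset.sum_comm' hcond]
        rw [Finset.mul_sum]
        refine Finset.sum_congr rfl ?_
        intro j hj
        rw [← Finset.mul_sum, ← Finset.mul_sum]
        rw [← pow_expand gen mulC εC ζZ hmulC hζq v ((s.erase a).erase j) k]
      rw [hA, hB]
      push_cast
      ring

variable (E : AC →ₗ⋆[ℂ] ℂ)

lemma gaussian_single (hmulC : IsConvProdOf gen mulC) (hζq : IsQuadOf gen ζZ)
    (hεC : IsCounitOf gen εC) (hE : IsGaussianOf gen mulC εC ζZ E)
    {κ : Type} [DecidableEq κ] (v : κ → W) (s : Finset κ) (k : ℕ) (hcard : s.card = 2 * k) :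
    E (∏ i ∈ s, gen (v i)) =
      ((k.factorial : ℂ))⁻¹ * powD mulC εC ζZ k (∏ i ∈ s, gen (v i)) := by
  rw [hE s.card _ (gradeOf_prod gen v s)]
  refine Finset.sum_eq_single_of_mem k (Finset.mem_range.2 (by omega)) ?_
  intro n _ hn
  rw [pow_vanish gen mulC εC ζZ hmulC hζq hεC n v s (by omega), mul_zero]

lemma gaussian_odd (hmulC : IsConvProdOf gen mulC) (hζq : IsQuadOf gen ζZ)
    (hεC : IsCounitOf gen εC) (hE : IsGaussianOf gen mulC εC ζZ E)
    {κ : Type} [DecidableEq κ] (v : κ → W) (s : Finset κ) (hcard : s.card % 2 = 1) :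
    E (∏ i ∈ s, gen (v i)) = 0 := by
  rw [hE s.card _ (gradeOf_prod gen v s)]
  refine Finset.sum_eq_zero ?_
  intro n _
  rw [pow_vanish gen mulC εC ζZ hmulC hζq hεC n v s (by omega), mul_zero]

lemma E_wick (hmulC : IsConvProdOf gen mulC) (hζq : IsQuadOf gen ζZ)
    (hεC : IsCounitOf gen εC) (hE : IsGaussianOf gen mulC εC ζZ E)
    {κ : Type} [DecidableEq κ] (v : κ → W) (s : Finset κ) {a : κ} (ha : a ∈ s) :
    E (∏ i ∈ s, gen (v i)) = ∑ j ∈ s.erase a, ζZ (gen (v a) * gen (v j)) *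
      E (∏ i ∈ (s.erase a).erase j, gen (v i)) := by
  have hcard2 : ∀ j ∈ s.erase a, ((s.erase a).erase j).card = s.card - 2 := by
    intro j hj
    rw [Finset.card_erase_of_mem hj, Finset.card_erase_of_mem ha]
    omega
  have h2 : ∀ j ∈ s.erase a, 2 ≤ s.card := by
    intro j hj
    rw [Finset.mem_erase] at hj
    exact Finset.one_lt_card.2 ⟨a, ha, j, hj.2, Ne.symm hj.1⟩
  rcases Nat.even_or_odd s.card with ⟨k, hk⟩ | ⟨k, hk⟩
  · -- even case, k ≥ 1 since s nonempty
    have hpos : s.card ≠ 0 := Finset.card_ne_zero.2 ⟨a, ha⟩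
    obtain ⟨k', rfl⟩ : ∃ k', k = k' + 1 := ⟨k - 1, by omega⟩
    have hcard : s.card = 2 * (k' + 1) := by omega
    rw [gaussian_single gen mulC εC ζZ E hmulC hζq hεC hE v s (k' + 1) hcard]
    rw [pow_wick gen mulC εC ζZ hmulC hζq hεC k' v s ha]
    have hfac : (((k' + 1).factorial : ℂ))⁻¹ * ((k' : ℂ) + 1) = ((k'.factorial : ℂ))⁻¹ := by
      rw [Nat.factorial_succ]
      push_cast
      rw [mul_inv]
      have h1 : ((k' : ℂ) + 1) ≠ 0 := by
        have := Nat.cast_add_one_ne_zero (R := ℂ) k'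
        exact_mod_cast this
      have h2 : ((k'.factorial : ℂ)) ≠ 0 := by
        exact_mod_cast Nat.cast_ne_zero.2 (Nat.factorial_ne_zero k')
      field_simp
    rw [← mul_assoc, hfac, Finset.mul_sum]
    refine Finset.sum_congr rfl ?_
    intro j hj
    rw [gaussian_single gen mulC εC ζZ E hmulC hζq hεC hE v _ k'
      (by rw [hcard2 j hj]; omega)]
    ring
  · rw [gaussian_odd gen mulC εC ζZ E hmulC hζq hεC hE v s (by omega)]
    refine (Finset.sum_eq_zero ?_).symm
    intro j hj
    have := h2 j hj
    rw [gaussian_odd gen mulC εC ζZ E hmulC hζq hεC hE v _ (by rw [hcard2 j hj]; omega), mul_zero]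

lemma sum_erase_none {β M : Type} [Fintype β] [DecidableEq β] [AddCommGroup M]
    (f : Option β → M) :
    ∑ j ∈ (Finset.univ : Finset (Option β)).erase none, f j = ∑ b : β, f (some b) := by
  have h := Finset.add_sum_erase Finset.univ f (Finset.mem_univ (none : Option β))
  have h2 := Fintype.sum_option f
  rw [h2] at h
  exact (add_right_injective (f none)) h

lemma erase_none_erase_some {β : Type} [Fintype β] [DecidableEq β] (b : β) :
    ((Finset.univ : Finset (Option β)).erase none).erase (some b) =
      ((Finset.univ : Finset β).erase b).map Function.Embedding.some := by
  ext x
  cases x <;> simp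

lemma univ_sum_erase_inl {α γ : Type} [Fintype α] [Fintype γ] [DecidableEq α] [DecidableEq γ]
    (j : α) :
    (Finset.univ : Finset (α ⊕ γ)).erase (Sum.inl j) =
      ((Finset.univ : Finset α).erase j).disjSum Finset.univ := by
  ext x
  cases x <;> simp

lemma univ_sum_erase_inr {α γ : Type} [Fintype α] [Fintype γ] [DecidableEq α] [DecidableEq γ]
    (j : γ) :
    (Finset.univ : Finset (α ⊕ γ)).erase (Sum.inr j) =
      (Finset.univ : Finset α).disjSum ((Finset.univ : Finset γ).erase j) := by
  ext x
  cases x <;> simp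

lemma E_wick_core (hmulC : IsConvProdOf gen mulC) (hζq : IsQuadOf gen ζZ)
    (hεC : IsCounitOf gen εC) (hE : IsGaussianOf gen mulC εC ζZ E)
    {r q : ℕ} (w : W) (xs : Fin r → W) (ys : Fin q → W) :
    E (gen w * ((∏ i, gen (xs i)) * ∏ i, gen (ys i))) =
      (∑ j, ζZ (gen w * gen (xs j)) *
        E ((∏ i ∈ Finset.univ.erase j, gen (xs i)) * ∏ i, gen (ys i))) +
      ∑ j, ζZ (gen w * gen (ys j)) *
        E ((∏ i, gen (xs i)) * ∏ i ∈ Finset.univ.erase j, gen (ys i)) := by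
  classical
  set β := (Fin r ⊕ Fin q) with hβ
  set v : Option β → W := fun o => o.elim w (Sum.elim xs ys) with hv
  have hprod : gen w * ((∏ i, gen (xs i)) * ∏ i, gen (ys i)) =
      ∏ i ∈ (Finset.univ : Finset (Option β)), gen (v i) := by
    rw [Fintype.prod_option (fun o => gen (v o)), Fintype.prod_sum_type]
    rfl
  rw [hprod, E_wick gen mulC εC ζZ E hmulC hζq hεC hE v Finset.univ
    (Finset.mem_univ (none : Option β))]
  rw [sum_erase_none (fun j => ζZ (gen (v none) * gen (v j)) *
    E (∏ i ∈ ((Finset.univ : Finset (Option β)).erase none).erase j, gen (v i)))]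
  rw [Fintype.sum_sum_type]
  congr 1
  · refine Finset.sum_congr rfl ?_
    intro j _
    rw [erase_none_erase_some (Sum.inl j), Finset.prod_map, univ_sum_erase_inl j,
      Finset.prod_disjSum]
    rfl
  · refine Finset.sum_congr rfl ?_
    intro j _
    rw [erase_none_erase_some (Sum.inr j), Finset.prod_map, univ_sum_erase_inr j,
      Finset.prod_disjSum]
    rfl
end Wick
section Symp
set_option linter.unusedSectionVars false

variable {V : Type} [NormedAddCommGroup V] [InnerProductSpace ℂ V]

local notation "⟪" x ", " y "⟫" => (inner ℂ x y : ℂ)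

lemma real_half_smul (v : V) : (2 : ℝ)⁻¹ • v = ((2 : ℂ))⁻¹ • v := by
  rw [show ((2:ℂ))⁻¹ = ((2⁻¹ : ℝ) : ℂ) by norm_num, Complex.coe_smul]

section TCA
variable (T C A : V → V)
  (hadd : ∀ x y : V, T (x + y) = T x + T y)
  (hC : ∀ x : V, C x = (2 : ℝ)⁻¹ • (T x - Complex.I • T (Complex.I • x)))
  (hA : ∀ x : V, A x = (2 : ℝ)⁻¹ • (T x + Complex.I • T (Complex.I • x)))

include hC hA in
lemma hCA_sum : ∀ x : V, C x + A x = T x := by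
  intro x
  rw [hC, hA, real_half_smul, real_half_smul]
  module

include hC hA in
lemma hTi_eq : ∀ x : V, T (Complex.I • x) = Complex.I • C x - Complex.I • A x := by
  intro x
  rw [hC, hA, real_half_smul, real_half_smul]
  have : Complex.I • ((2:ℂ)⁻¹ • (T x - Complex.I • T (Complex.I • x))) -
      Complex.I • ((2:ℂ)⁻¹ • (T x + Complex.I • T (Complex.I • x))) =
      (- (Complex.I * Complex.I)) • T (Complex.I • x) := by
    module
  rw [this]
  simp [Complex.I_mul_I]

include hadd in
lemma T_zero : T 0 = 0 := by
  have := hadd 0 0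
  simpa using this.symm

include hadd in
lemma T_neg : ∀ x : V, T (-x) = - T x := by
  intro x
  have h := hadd x (-x)
  rw [add_neg_cancel, T_zero T hadd] at h
  linear_combination (norm := module) -h

include hadd hC in
lemma C_add : ∀ x y : V, C (x + y) = C x + C y := by
  intro x y
  rw [hC x, hC y, hC (x + y), smul_add Complex.I x y, hadd, hadd]
  module

include hadd hA in
lemma A_add : ∀ x y : V, A (x + y) = A x + A y := by
  intro x y
  rw [hA x, hA y, hA (x + y), smul_add Complex.I x y, hadd, hadd]
  module

include hadd hC in
lemma C_smul_I : ∀ x : V, C (Complex.I • x) = Complex.I • C x := by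
  intro x
  have h1 : Complex.I • Complex.I • x = -x := by
    rw [smul_smul, Complex.I_mul_I, neg_smul, one_smul]
  have h3 : Complex.I • Complex.I • T (Complex.I • x) = - T (Complex.I • x) := by
    rw [smul_smul, Complex.I_mul_I, neg_smul, one_smul]
  rw [hC (Complex.I • x), hC x, h1, T_neg T hadd, real_half_smul, real_half_smul]
  linear_combination (norm := module) ((2:ℂ))⁻¹ • h3

include hadd hA in
lemma A_smul_I : ∀ x : V, A (Complex.I • x) = - (Complex.I • A x) := by
  intro x
  have h1 : Complex.I • Complex.I • x = -x := by
    rw [smul_smul, Complex.I_mul_I, neg_smul, one_smul]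
  have h3 : Complex.I • Complex.I • T (Complex.I • x) = - T (Complex.I • x) := by
    rw [smul_smul, Complex.I_mul_I, neg_smul, one_smul]
  rw [hA (Complex.I • x), hA x, h1, T_neg T hadd, real_half_smul, real_half_smul]
  linear_combination (norm := module) ((2:ℂ))⁻¹ • h3

include hadd hC hA in
lemma star_identities (hsymp : ∀ x y : V, (⟪T x, T y⟫).im = (⟪x, y⟫).im) :
    (∀ x y : V, ⟪C x, C y⟫ - (starRingEnd ℂ) ⟪A x, A y⟫ = ⟪x, y⟫) ∧
    (∀ x y : V, ⟪C x, A y⟫ = (starRingEnd ℂ) ⟪A x, C y⟫) := by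
  have hti := hTi_eq T C A hC hA
  have hca := hCA_sum T C A hC hA
  have key : ∀ x y : V, (⟪C x, C y⟫ - (starRingEnd ℂ) ⟪A x, A y⟫ = ⟪x, y⟫) ∧
      (⟪C x, A y⟫ = (starRingEnd ℂ) ⟪A x, C y⟫) := by
    intro x y
    have E1 : ⟪T x, T y⟫ = ⟪C x, C y⟫ + ⟪C x, A y⟫ + ⟪A x, C y⟫ + ⟪A x, A y⟫ := by
      rw [← hca x, ← hca y]
      simp only [inner_add_left, inner_add_right]
      ring
    have E2 : ⟪T (Complex.I • x), T y⟫ =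
        -Complex.I * (⟪C x, C y⟫ + ⟪C x, A y⟫ - ⟪A x, C y⟫ - ⟪A x, A y⟫) := by
      rw [hti x, ← hca y]
      simp only [inner_sub_left, inner_add_right, inner_smul_left, Complex.conj_I]
      ring
    have E3 : ⟪T x, T (Complex.I • y)⟫ =
        Complex.I * (⟪C x, C y⟫ - ⟪C x, A y⟫ + ⟪A x, C y⟫ - ⟪A x, A y⟫) := by
      rw [hti y, ← hca x]
      simp only [inner_sub_right, inner_add_left, inner_smul_right]
      ring
    have E4 : ⟪T (Complex.I • x), T (Complex.I • y)⟫ =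
        ⟪C x, C y⟫ - ⟪C x, A y⟫ - ⟪A x, C y⟫ + ⟪A x, A y⟫ := by
      rw [hti x, hti y]
      simp only [inner_sub_left, inner_sub_right, inner_smul_left, inner_smul_right,
        Complex.conj_I]
      ring_nf
      simp only [Complex.I_sq]
      ring
    have f1 := hsymp x y
    have f2 := hsymp (Complex.I • x) y
    have f3 := hsymp x (Complex.I • y)
    have f4 := hsymp (Complex.I • x) (Complex.I • y)
    rw [E1] at f1
    rw [E2, inner_smul_left, Complex.conj_I] at f2
    rw [E3, inner_smul_right] at f3
    rw [E4, inner_smul_left, inner_smul_right, Complex.conj_I] at f4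
    constructor
    · rw [Complex.ext_iff]
      constructor
      · simp only [Complex.sub_re, Complex.conj_re, Complex.add_re, Complex.sub_im,
          Complex.add_im, Complex.mul_re, Complex.mul_im, Complex.neg_re, Complex.neg_im,
          Complex.I_re, Complex.I_im, Complex.conj_im] at f1 f2 f3 f4 ⊢
        linarith
      · simp only [Complex.sub_re, Complex.conj_re, Complex.add_re, Complex.sub_im,
          Complex.add_im, Complex.mul_re, Complex.mul_im, Complex.neg_re, Complex.neg_im,
          Complex.I_re, Complex.I_im, Complex.conj_im] at f1 f2 f3 f4 ⊢
        linarith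
    · rw [Complex.ext_iff]
      constructor
      · simp only [Complex.sub_re, Complex.conj_re, Complex.add_re, Complex.sub_im,
          Complex.add_im, Complex.mul_re, Complex.mul_im, Complex.neg_re, Complex.neg_im,
          Complex.I_re, Complex.I_im, Complex.conj_im] at f1 f2 f3 f4 ⊢
        linarith
      · simp only [Complex.sub_re, Complex.conj_re, Complex.add_re, Complex.sub_im,
          Complex.add_im, Complex.mul_re, Complex.mul_im, Complex.neg_re, Complex.neg_im,
          Complex.I_re, Complex.I_im, Complex.conj_im] at f1 f2 f3 f4 ⊢
        linarith
  exact ⟨fun x y => (key x y).1, fun x y => (key x y).2⟩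

end TCA

end Symp

section AnnLemmas
set_option linter.unusedSectionVars false

variable {V A AC : Type} [NormedAddCommGroup V] [InnerProductSpace ℂ V]
  [CommRing A] [Algebra ℂ A] [CommRing AC] [Algebra ℂ AC]

lemma ann_prod (ι : V →ₗ[ℂ] A) (aA : V → A →ₗ[ℂ] A) (haA : IsAnn ι aA) (u : V)
    {κ : Type} [DecidableEq κ] (s : Finset κ) (x : κ → V) :
    aA u (∏ i ∈ s, ι (x i)) =
      ∑ j ∈ s, (inner ℂ u (x j) : ℂ) • ∏ i ∈ s.erase j, ι (x i) := by
  induction s using Finset.induction_on with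
  | empty => simpa using (haA u).2.1
  | @insert a s has ih =>
      rw [Finset.prod_insert has, (haA u).1, (haA u).2.2 (x a), ih]
      rw [Finset.sum_insert has, Finset.erase_insert has, smul_mul_assoc, one_mul]
      congr 1
      rw [Finset.mul_sum]
      refine Finset.sum_congr rfl ?_
      intro j hj
      have hne : j ≠ a := by rintro rfl; exact has hj
      rw [Finset.erase_insert_of_ne hne.symm, Finset.prod_insert
        (fun h => has (Finset.mem_of_mem_erase h)), mul_smul_comm]

lemma antihom_prod (m : A → AC) (hm : IsAntiAlgHom m)
    {κ : Type} (s : Finset κ) (f : κ → A) :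
    m (∏ i ∈ s, f i) = ∏ i ∈ s, m (f i) := by
  classical
  induction s using Finset.induction_on with
  | empty => simpa using hm.2.2.2
  | @insert a s has ih =>
      rw [Finset.prod_insert has, Finset.prod_insert has, hm.2.2.1, ih]

end AnnLemmas

/-- Existence of weak metaplectic operators.  For `g ∈ Sp(V)`, the Gaussian
`u_g = e^Z ∈ SV_ℂ'` — where `Z` acts by `Z(v₊) = (C_g⁻¹v)₋ + (Z_{g⁻¹}v)₊` and
`Z(v₋) = (C_{g⁻¹}⁻¹v)₊ + (Z_g v)₋`, so that the corresponding quadratic `ζ_Z`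
(with `ζ_Z(ab) = ⟨a|Zb⟩`) has `ζ_Z(x₊y₊) = ⟨x|Z_{g⁻¹}y⟩`,
`ζ_Z(x₊y₋) = ⟨x|C_{g⁻¹}⁻¹y⟩`, `ζ_Z(x₋y₋) = ⟨Z_g y|x⟩` — is the kernel of a
nonzero linear map `U_g : SV → SV'` satisfying the intertwining relations
`U_g c(v) = (c(C_g v) + a(A_g v)) U_g` and `U_g a(v) = (c(A_g v) + a(C_g v)) U_g`. -/
theorem weak_metaplectic_exists {V A AC : Type}
    [NormedAddCommGroup V] [InnerProductSpace ℂ V] [CompleteSpace V]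
    [CommRing A] [Algebra ℂ A] [CommRing AC] [Algebra ℂ AC]
    (ι : V →ₗ[ℂ] A) (hA : IsSymmAlg ι) (hspan : SpanProdsOf fun w => ι w)
    (aA : V → A →ₗ[ℂ] A) (haA : IsAnn ι aA)
    (p : A →ₐ[ℂ] AC) (m : A → AC) (hm : IsAntiAlgHom m)
    (gen : V ⊕ V → AC)
    (hgen : ∀ w : V ⊕ V, gen w = Sum.elim (fun v => p (ι v)) (fun v => m (ι v)) w)
    (hspanC : SpanProdsOf gen)
    (mulC : (AC →ₗ⋆[ℂ] ℂ) → (AC →ₗ⋆[ℂ] ℂ) → (AC →ₗ⋆[ℂ] ℂ))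
    (hmulC : IsConvProdOf gen mulC)
    (εC : AC →ₗ⋆[ℂ] ℂ) (hεC : IsCounitOf gen εC)
    -- the symplectic automorphism and its parts
    (g : V ≃L[ℝ] V)
    (hg : ∀ x y : V, (inner ℂ (g x) (g y) : ℂ).im = (inner ℂ x y : ℂ).im)
    (Cg Ag Cg' Ag' Zg Zg' Cg'inv : V → V)
    (hCg : ∀ x : V, Cg x = (2 : ℝ)⁻¹ • (g x - Complex.I • g (Complex.I • x)))
    (hAg : ∀ x : V, Ag x = (2 : ℝ)⁻¹ • (g x + Complex.I • g (Complex.I • x)))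
    (hCg' : ∀ x : V, Cg' x = (2 : ℝ)⁻¹ • (g.symm x - Complex.I • g.symm (Complex.I • x)))
    (hAg' : ∀ x : V, Ag' x = (2 : ℝ)⁻¹ • (g.symm x + Complex.I • g.symm (Complex.I • x)))
    (hZg : ∀ x : V, Cg (Zg x) = Ag x)
    (hZg' : ∀ x : V, Cg' (Zg' x) = Ag' x)
    (hCg'inv : ∀ x : V, Cg' (Cg'inv x) = x ∧ Cg'inv (Cg' x) = x)
    -- the quadratic corresponding to Z
    (ζZ : AC →ₗ⋆[ℂ] ℂ) (hζq : IsQuadOf gen ζZ)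
    (hζpp : ∀ x y : V, ζZ (p (ι x) * p (ι y)) = (inner ℂ x (Zg' y) : ℂ))
    (hζpm : ∀ x y : V, ζZ (p (ι x) * m (ι y)) = (inner ℂ x (Cg'inv y) : ℂ))
    (hζmm : ∀ x y : V, ζZ (m (ι x) * m (ι y)) = (inner ℂ (Zg y) x : ℂ))
    -- the Gaussian u_g = e^Z
    (E : AC →ₗ⋆[ℂ] ℂ) (hE : IsGaussianOf gen mulC εC ζZ E) :
    ∃ Ug : A →ₗ[ℂ] (A →ₗ⋆[ℂ] ℂ),
      Ug ≠ 0 ∧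
      -- U_g has kernel u_g = e^Z
      (∀ φ ψ : A, Ug φ ψ = E (p ψ * m φ)) ∧
      -- U_g c(v) = (c(C_g v) + a(A_g v)) U_g
      (∀ (v : V) (φ ψ : A),
        Ug (ι v * φ) ψ = Ug φ (aA (Cg v) ψ) + Ug φ (ι (Ag v) * ψ)) ∧
      -- U_g a(v) = (c(A_g v) + a(C_g v)) U_g
      (∀ (v : V) (φ ψ : A),
        Ug (aA v φ) ψ = Ug φ (aA (Ag v) ψ) + Ug φ (ι (Cg v) * ψ)) := by
    classical
  -- the operator
  set Ug : A →ₗ[ℂ] (A →ₗ⋆[ℂ] ℂ) :=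
    { toFun := fun φ =>
        { toFun := fun ψ => E (p ψ * m φ)
          map_add' := fun ψ₁ ψ₂ => by simp only [map_add, add_mul]
          map_smul' := fun c ψ => by
            simp only [map_smul, smul_mul_assoc, LinearMap.map_smulₛₗ] }
      map_add' := fun φ₁ φ₂ => by
        ext ψ
        simp only [LinearMap.coe_mk, AddHom.coe_mk, LinearMap.add_apply]
        rw [hm.1, mul_add, map_add]
      map_smul' := fun c φ => by
        ext ψ
        simp only [LinearMap.coe_mk, AddHom.coe_mk, RingHom.id_apply,
          LinearMap.smul_apply]
        rw [hm.2.1, mul_smul_comm, LinearMap.map_smulₛₗ]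
        simp } with hUg
  have hker : ∀ φ ψ : A, Ug φ ψ = E (p ψ * m φ) := fun φ ψ => rfl
  -- E of 1 is 1
  have hone : E 1 = 1 := by
    have h1 : (1 : AC) ∈ GradeOf gen 0 :=
      Submodule.subset_span ⟨Fin.elim0, by simp⟩
    have := hE 0 1 h1
    rw [this]
    simpa [powD] using hεC 0 Fin.elim0
  have hUgne : Ug ≠ 0 := by
    intro h0
    have h11 : Ug 1 1 = 1 := by
      rw [hker, map_one, hm.2.2.2, one_mul, hone]
    rw [h0] at h11
    simp at h11
  -- basic algebra of the C/A parts
  have hgadd : ∀ x y : V, g (x + y) = g x + g y := fun x y => map_add g x y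
  have hg'add : ∀ x y : V, g.symm (x + y) = g.symm x + g.symm y :=
    fun x y => map_add g.symm x y
  have hg'symp : ∀ x y : V, (inner ℂ (g.symm x) (g.symm y) : ℂ).im = (inner ℂ x y : ℂ).im := by
    intro x y
    rw [← hg (g.symm x) (g.symm y), g.apply_symm_apply, g.apply_symm_apply]
  have hCadd := C_add (⇑g) Cg hgadd hCg
  have hAadd := A_add (⇑g) Ag hgadd hAg
  have hC'add := C_add (⇑g.symm) Cg' hg'add hCg'
  have hA'add := A_add (⇑g.symm) Ag' hg'add hAg'
  have hCsI := C_smul_I (⇑g) Cg hgadd hCg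
  have hAsI := A_smul_I (⇑g) Ag hgadd hAg
  have hC'sI := C_smul_I (⇑g.symm) Cg' hg'add hCg'
  have hA'sI := A_smul_I (⇑g.symm) Ag' hg'add hAg'
  have hCAg := hCA_sum (⇑g) Cg Ag hCg hAg
  have hCAg' := hCA_sum (⇑g.symm) Cg' Ag' hCg' hAg'
  obtain ⟨hstar1, hstar2⟩ := star_identities (⇑g) Cg Ag hgadd hCg hAg hg
  -- composition identities
  have hcomp : ∀ (T T' : V → V) (C' A' : V → V) (CT AT : V → V),
      (∀ x y : V, T (x + y) = T x + T y) →
      (∀ x : V, CT x = (2 : ℝ)⁻¹ • (T x - Complex.I • T (Complex.I • x))) →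
      (∀ x : V, AT x = (2 : ℝ)⁻¹ • (T x + Complex.I • T (Complex.I • x))) →
      (∀ x y : V, T' (x + y) = T' x + T' y) →
      (∀ x : V, C' x = (2 : ℝ)⁻¹ • (T' x - Complex.I • T' (Complex.I • x))) →
      (∀ x : V, A' x = (2 : ℝ)⁻¹ • (T' x + Complex.I • T' (Complex.I • x))) →
      (∀ x : V, T (T' x) = x) →
      ∀ x : V, (CT (C' x) + AT (A' x) = x) ∧ (AT (C' x) + CT (A' x) = 0) := by
    intro T T' C' A' CT AT hTadd hCT hAT hT'add hC' hA' hTT' x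
    have hca := hCA_sum T CT AT hCT hAT
    have hca' := hCA_sum T' C' A' hC' hA'
    have hCadd' := C_add T CT hTadd hCT
    have hAadd' := A_add T AT hTadd hAT
    have hCsI' := C_smul_I T CT hTadd hCT
    have hAsI' := A_smul_I T AT hTadd hAT
    have hC'sI' := C_smul_I T' C' hT'add hC'
    have hA'sI' := A_smul_I T' A' hT'add hA'
    have hCneg : ∀ u : V, CT (-u) = - CT u := T_neg CT (hCadd')
    have hAneg : ∀ u : V, AT (-u) = - AT u := T_neg AT (hAadd')
    -- P1
    have P1 : CT (C' x) + CT (A' x) + (AT (C' x) + AT (A' x)) = x := by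
      have h := hTT' x
      rw [← hca' x] at h
      rw [← hca (C' x + A' x), hCadd', hAadd'] at h
      linear_combination (norm := module) h
    -- P2
    have P2 : CT (C' x) - CT (A' x) - AT (C' x) + AT (A' x) = x := by
      refine smul_right_injective V Complex.I_ne_zero ?_
      have h := hTT' (Complex.I • x)
      rw [← hca' (Complex.I • x), hC'sI', hA'sI'] at h
      rw [hTadd, T_neg T hTadd] at h
      rw [hTi_eq T CT AT hCT hAT, hTi_eq T CT AT hCT hAT] at h
      linear_combination (norm := module) h
    constructor
    · linear_combination (norm := module) ((2:ℂ)⁻¹ : ℂ) • P1 + ((2:ℂ)⁻¹ : ℂ) • P2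
    · linear_combination (norm := module) ((2:ℂ)⁻¹ : ℂ) • P1 - ((2:ℂ)⁻¹ : ℂ) • P2
  have hgg' := hcomp (⇑g) (⇑g.symm) Cg' Ag' Cg Ag hgadd hCg hAg hg'add hCg' hAg'
    (fun x => g.apply_symm_apply x)
  have hg'g := hcomp (⇑g.symm) (⇑g) Cg Ag Cg' Ag' hg'add hCg' hAg' hgadd hCg hAg
    (fun x => g.symm_apply_apply x)
    -- symmetry of the Z forms
  have symZg : ∀ x y : V, (inner ℂ (Zg x) y : ℂ) = (inner ℂ (Zg y) x : ℂ) := by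
    intro x y
    have h1 := hζmm y x
    have h2 := hζmm x y
    rw [mul_comm] at h1
    exact h1.symm.trans h2
  have symZg' : ∀ x y : V, (inner ℂ x (Zg' y) : ℂ) = (inner ℂ y (Zg' x) : ℂ) := by
    intro x y
    have h1 := hζpp x y
    have h2 := hζpp y x
    rw [mul_comm] at h1
    exact h1.symm.trans h2
  have hC'inj : Function.Injective Cg' := fun u w h => by
    have h2 := congrArg Cg'inv h
    rwa [(hCg'inv u).2, (hCg'inv w).2] at h2
  have adjC : ∀ u w : V, (inner ℂ u (Cg' w) : ℂ) = inner ℂ (Cg u) w := by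
    intro u w
    have h3 := (hgg' w).1
    have h4 := (hgg' w).2
    have hthis : (inner ℂ (Cg u) w : ℂ) = inner ℂ (Cg u) (Cg (Cg' w) + Ag (Ag' w)) := by
      rw [h3]
    rw [inner_add_right] at hthis
    have e1 : (inner ℂ (Cg u) (Cg (Cg' w)) : ℂ) =
        inner ℂ u (Cg' w) + (starRingEnd ℂ) (inner ℂ (Ag u) (Ag (Cg' w))) := by
      have h5 := hstar1 u (Cg' w)
      linear_combination h5
    have e2 : (inner ℂ (Cg u) (Ag (Ag' w)) : ℂ) =
        (starRingEnd ℂ) (inner ℂ (Ag u) (Cg (Ag' w))) := hstar2 u (Ag' w)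
    rw [e1, e2] at hthis
    have e3 : (starRingEnd ℂ) (inner ℂ (Ag u) (Ag (Cg' w)) : ℂ) +
        (starRingEnd ℂ) (inner ℂ (Ag u) (Cg (Ag' w)) : ℂ) = 0 := by
      rw [← map_add, ← inner_add_right, h4, inner_zero_right, map_zero]
    linear_combination - hthis - e3
  have S3 : ∀ v y : V, (inner ℂ v y : ℂ) = inner ℂ (Cg v) (Cg'inv y) := by
    intro v y
    conv_lhs => rw [← (hCg'inv y).1]
    exact adjC v (Cg'inv y)
  have S2 : ∀ v y : V, (inner ℂ (Zg y) v : ℂ) = inner ℂ (Ag v) (Cg'inv y) := by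
    intro v y
    conv_lhs => rw [← (hCg'inv y).1]
    rw [symZg, adjC, hZg]
  have S4 : ∀ v x : V, (inner ℂ x (Ag v) : ℂ) + inner ℂ (Cg v) (Zg' x) = 0 := by
    intro v x
    have hz : Zg' (Cg v) = - Ag v := by
      apply hC'inj
      rw [hZg' (Cg v)]
      have h4' := (hg'g v).2
      have hC'neg : Cg' (- Ag v) = - Cg' (Ag v) := T_neg Cg' hC'add (Ag v)
      rw [hC'neg]
      linear_combination (norm := module) h4'
    rw [symZg' (Cg v) x, hz, inner_neg_right]
    ring
  have S1 : ∀ v x : V, (inner ℂ x (Cg'inv v) : ℂ) = inner ℂ x (Cg v) + inner ℂ (Ag v) (Zg' x) := by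
    intro v x
    have hz : Cg'inv v = Cg v + Zg' (Ag v) := by
      apply hC'inj
      rw [(hCg'inv v).1, hC'add, hZg' (Ag v)]
      exact ((hg'g v).1).symm
    rw [hz, inner_add_right, ← symZg' (Ag v) x]
  -- generators
  have hgenl : ∀ w : V, gen (Sum.inl w) = p (ι w) := fun w => by rw [hgen]; rfl
  have hgenr : ∀ w : V, gen (Sum.inr w) = m (ι w) := fun w => by rw [hgen]; rfl
  have hpprod : ∀ {κ : Type} (s : Finset κ) (z : κ → V),
      p (∏ i ∈ s, ι (z i)) = ∏ i ∈ s, gen (Sum.inl (z i)) := by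
    intro κ s z
    rw [map_prod]
    exact Finset.prod_congr rfl fun i _ => (hgenl (z i)).symm
  have hmprodg : ∀ {κ : Type} (s : Finset κ) (z : κ → V),
      m (∏ i ∈ s, ι (z i)) = ∏ i ∈ s, gen (Sum.inr (z i)) := by
    intro κ s z
    rw [antihom_prod m hm]
    exact Finset.prod_congr rfl fun i _ => (hgenr (z i)).symm
  -- the product cases
  have prodcase1 : ∀ (v : V) (q : ℕ) (y : Fin q → V) (r : ℕ) (x : Fin r → V),
      Ug (ι v * ∏ i, ι (y i)) (∏ i, ι (x i)) =
        Ug (∏ i, ι (y i)) (aA (Cg v) (∏ i, ι (x i))) +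
        Ug (∏ i, ι (y i)) (ι (Ag v) * ∏ i, ι (x i)) := by
    intro v q y r x
    set PX : AC := ∏ i, gen (Sum.inl (x i)) with hPX
    set MY : AC := ∏ i, gen (Sum.inr (y i)) with hMY
    set Aj : Fin r → ℂ := fun j =>
      E ((∏ i ∈ Finset.univ.erase j, gen (Sum.inl (x i))) * MY) with hAj
    set Bj : Fin q → ℂ := fun j =>
      E (PX * ∏ i ∈ Finset.univ.erase j, gen (Sum.inr (y i))) with hBj
    have hψ : p (∏ i, ι (x i)) = PX := hpprod Finset.univ x
    have hφ : m (∏ i, ι (y i)) = MY := hmprodg Finset.univ y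
    have hLHS : Ug (ι v * ∏ i, ι (y i)) (∏ i, ι (x i)) =
        (∑ j, (inner ℂ (x j) (Cg'inv v) : ℂ) * Aj j) +
          ∑ j, (inner ℂ (Zg (y j)) v : ℂ) * Bj j := by
      rw [hker, hψ, hm.2.2.1, hφ]
      rw [show PX * (m (ι v) * MY) = m (ι v) * (PX * MY) by ring]
      rw [← hgenr v]
      rw [E_wick_core gen mulC εC ζZ E hmulC hζq hεC hE (Sum.inr v)
        (fun i => Sum.inl (x i)) (fun i => Sum.inr (y i))]
      congr 1
      · refine Finset.sum_congr rfl fun j _ => ?_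
        rw [hgenr v, hgenl (x j), mul_comm (m (ι v)) (p (ι (x j))), hζpm]
      · refine Finset.sum_congr rfl fun j _ => ?_
        rw [hgenr v, hgenr (y j), hζmm]
    have hR1 : Ug (∏ i, ι (y i)) (aA (Cg v) (∏ i, ι (x i))) =
        ∑ j, (inner ℂ (x j) (Cg v) : ℂ) * Aj j := by
      rw [ann_prod ι aA haA (Cg v) Finset.univ x, map_sum]
      refine Finset.sum_congr rfl fun j _ => ?_
      rw [LinearMap.map_smulₛₗ, hker, hpprod (Finset.univ.erase j) x, hφ]
      rw [inner_conj_symm]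
      rw [smul_eq_mul]
    have hR2 : Ug (∏ i, ι (y i)) (ι (Ag v) * ∏ i, ι (x i)) =
        (∑ j, (inner ℂ (Ag v) (Zg' (x j)) : ℂ) * Aj j) +
          ∑ j, (inner ℂ (Ag v) (Cg'inv (y j)) : ℂ) * Bj j := by
      rw [hker, map_mul p, hψ, hφ]
      rw [show p (ι (Ag v)) * PX * MY = p (ι (Ag v)) * (PX * MY) by ring]
      rw [← hgenl (Ag v)]
      rw [E_wick_core gen mulC εC ζZ E hmulC hζq hεC hE (Sum.inl (Ag v))
        (fun i => Sum.inl (x i)) (fun i => Sum.inr (y i))]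
      congr 1
      · refine Finset.sum_congr rfl fun j _ => ?_
        rw [hgenl (Ag v), hgenl (x j), hζpp]
      · refine Finset.sum_congr rfl fun j _ => ?_
        rw [hgenl (Ag v), hgenr (y j), hζpm]
    rw [hLHS, hR1, hR2]
    have e1 : (∑ j, (inner ℂ (x j) (Cg'inv v) : ℂ) * Aj j) =
        (∑ j, (inner ℂ (x j) (Cg v) : ℂ) * Aj j) +
          ∑ j, (inner ℂ (Ag v) (Zg' (x j)) : ℂ) * Aj j := by
      rw [← Finset.sum_add_distrib]
      refine Finset.sum_congr rfl fun j _ => ?_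
      rw [S1 v (x j)]
      ring
    have e2 : (∑ j, (inner ℂ (Zg (y j)) v : ℂ) * Bj j) =
        ∑ j, (inner ℂ (Ag v) (Cg'inv (y j)) : ℂ) * Bj j :=
      Finset.sum_congr rfl fun j _ => by rw [S2 v (y j)]
    rw [e1, e2]
    ring
  have prodcase2 : ∀ (v : V) (q : ℕ) (y : Fin q → V) (r : ℕ) (x : Fin r → V),
      Ug (aA v (∏ i, ι (y i))) (∏ i, ι (x i)) =
        Ug (∏ i, ι (y i)) (aA (Ag v) (∏ i, ι (x i))) +
        Ug (∏ i, ι (y i)) (ι (Cg v) * ∏ i, ι (x i)) := by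
    intro v q y r x
    set PX : AC := ∏ i, gen (Sum.inl (x i)) with hPX
    set MY : AC := ∏ i, gen (Sum.inr (y i)) with hMY
    set Aj : Fin r → ℂ := fun j =>
      E ((∏ i ∈ Finset.univ.erase j, gen (Sum.inl (x i))) * MY) with hAj
    set Bj : Fin q → ℂ := fun j =>
      E (PX * ∏ i ∈ Finset.univ.erase j, gen (Sum.inr (y i))) with hBj
    have hψ : p (∏ i, ι (x i)) = PX := hpprod Finset.univ x
    have hφ : m (∏ i, ι (y i)) = MY := hmprodg Finset.univ y
    have hLHS : Ug (aA v (∏ i, ι (y i))) (∏ i, ι (x i)) =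
        ∑ j, (inner ℂ v (y j) : ℂ) * Bj j := by
      rw [ann_prod ι aA haA v Finset.univ y, map_sum, LinearMap.sum_apply]
      refine Finset.sum_congr rfl fun j _ => ?_
      rw [LinearMap.map_smul, LinearMap.smul_apply, hker,
        hmprodg (Finset.univ.erase j) y, hψ, smul_eq_mul]
    have hR1 : Ug (∏ i, ι (y i)) (aA (Ag v) (∏ i, ι (x i))) =
        ∑ j, (inner ℂ (x j) (Ag v) : ℂ) * Aj j := by
      rw [ann_prod ι aA haA (Ag v) Finset.univ x, map_sum]
      refine Finset.sum_congr rfl fun j _ => ?_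
      rw [LinearMap.map_smulₛₗ, hker, hpprod (Finset.univ.erase j) x, hφ]
      rw [inner_conj_symm]
      rw [smul_eq_mul]
    have hR2 : Ug (∏ i, ι (y i)) (ι (Cg v) * ∏ i, ι (x i)) =
        (∑ j, (inner ℂ (Cg v) (Zg' (x j)) : ℂ) * Aj j) +
          ∑ j, (inner ℂ (Cg v) (Cg'inv (y j)) : ℂ) * Bj j := by
      rw [hker, map_mul p, hψ, hφ]
      rw [show p (ι (Cg v)) * PX * MY = p (ι (Cg v)) * (PX * MY) by ring]
      rw [← hgenl (Cg v)]
      rw [E_wick_core gen mulC εC ζZ E hmulC hζq hεC hE (Sum.inl (Cg v))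
        (fun i => Sum.inl (x i)) (fun i => Sum.inr (y i))]
      congr 1
      · refine Finset.sum_congr rfl fun j _ => ?_
        rw [hgenl (Cg v), hgenl (x j), hζpp]
      · refine Finset.sum_congr rfl fun j _ => ?_
        rw [hgenl (Cg v), hgenr (y j), hζpm]
    rw [hLHS, hR1, hR2]
    have ezero : (∑ j, (inner ℂ (x j) (Ag v) : ℂ) * Aj j) +
        ∑ j, (inner ℂ (Cg v) (Zg' (x j)) : ℂ) * Aj j = 0 := by
      rw [← Finset.sum_add_distrib]
      refine Finset.sum_eq_zero fun j _ => ?_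
      have h := S4 v (x j)
      linear_combination Aj j * h
    have e2 : (∑ j, (inner ℂ v (y j) : ℂ) * Bj j) =
        ∑ j, (inner ℂ (Cg v) (Cg'inv (y j)) : ℂ) * Bj j :=
      Finset.sum_congr rfl fun j _ => by rw [S3 v (y j)]
    rw [e2]
    linear_combination - ezero
  -- span induction, identity 1
  have red1 : ∀ (v : V) (q : ℕ) (y : Fin q → V) (ψ : A),
      Ug (ι v * ∏ i, ι (y i)) ψ =
        Ug (∏ i, ι (y i)) (aA (Cg v) ψ) + Ug (∏ i, ι (y i)) (ι (Ag v) * ψ) := by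
    intro v q y ψ
    induction hspan ψ using Submodule.span_induction with
    | mem a ha =>
        obtain ⟨r, x, rfl⟩ := ha
        exact prodcase1 v q y r x
    | zero => simp
    | add a b _ _ iha ihb =>
        rw [map_add, map_add, mul_add, map_add, map_add]
        rw [iha, ihb]
        ring
    | smul c a _ ih =>
        rw [LinearMap.map_smulₛₗ, LinearMap.map_smul, LinearMap.map_smulₛₗ,
          mul_smul_comm, LinearMap.map_smulₛₗ, ih]
        simp only [smul_eq_mul]
        ring
  have key1 : ∀ (v : V) (φ ψ : A),
      Ug (ι v * φ) ψ = Ug φ (aA (Cg v) ψ) + Ug φ (ι (Ag v) * ψ) := by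
    intro v φ
    induction hspan φ using Submodule.span_induction with
    | mem a ha =>
        obtain ⟨q, y, rfl⟩ := ha
        exact fun ψ => red1 v q y ψ
    | zero => intro ψ; simp
    | add a b _ _ iha ihb =>
        intro ψ
        rw [mul_add, map_add, map_add, LinearMap.add_apply, LinearMap.add_apply,
          LinearMap.add_apply, iha ψ, ihb ψ]
        ring
    | smul c a _ ih =>
        intro ψ
        rw [mul_smul_comm, map_smul, map_smul, LinearMap.smul_apply,
          LinearMap.smul_apply, LinearMap.smul_apply, ih ψ]
        rw [smul_add]
  -- span induction, identity 2
  have red2 : ∀ (v : V) (q : ℕ) (y : Fin q → V) (ψ : A),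
      Ug (aA v (∏ i, ι (y i))) ψ =
        Ug (∏ i, ι (y i)) (aA (Ag v) ψ) + Ug (∏ i, ι (y i)) (ι (Cg v) * ψ) := by
    intro v q y ψ
    induction hspan ψ using Submodule.span_induction with
    | mem a ha =>
        obtain ⟨r, x, rfl⟩ := ha
        exact prodcase2 v q y r x
    | zero => simp
    | add a b _ _ iha ihb =>
        rw [map_add, map_add, mul_add, map_add, map_add]
        rw [iha, ihb]
        ring
    | smul c a _ ih =>
        rw [LinearMap.map_smulₛₗ, LinearMap.map_smul, LinearMap.map_smulₛₗ,
          mul_smul_comm, LinearMap.map_smulₛₗ, ih]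
        simp only [smul_eq_mul]
        ring
  have key2 : ∀ (v : V) (φ ψ : A),
      Ug (aA v φ) ψ = Ug φ (aA (Ag v) ψ) + Ug φ (ι (Cg v) * ψ) := by
    intro v φ
    induction hspan φ using Submodule.span_induction with
    | mem a ha =>
        obtain ⟨q, y, rfl⟩ := ha
        exact fun ψ => red2 v q y ψ
    | zero => intro ψ; simp
    | add a b _ _ iha ihb =>
        intro ψ
        rw [map_add, map_add, map_add, LinearMap.add_apply, LinearMap.add_apply,
          LinearMap.add_apply, iha ψ, ihb ψ]
        ring
    | smul c a _ ih =>
        intro ψ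
        rw [map_smul, map_smul, map_smul, LinearMap.smul_apply,
          LinearMap.smul_apply, LinearMap.smul_apply, ih ψ]
        rw [smul_add]
  exact ⟨Ug, hUgne, hker, key1, key2⟩
end
end

section
/- With g ∈ Sp(V), Z as in the construction of the metaplectic kernel u_g = e^Z, and x, y ∈ V, one has ⟨(x₊ + y₋) | Z(x₊ + y₋)⟩ = 2⟨C_g⁻¹x | y⟩ + ⟨x | Z_{g⁻¹}x⟩ + ⟨Z_g y | y⟩, and consequently u_g((eˣ)₊(eʸ)₋) = exp( ½{ 2⟨C_g⁻¹x|y⟩ + ⟨x|Z_{g⁻¹}x⟩ + ⟨Z_g y|y⟩ } ). -/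
open scoped ComplexConjugate

noncomputable section

set_option linter.unusedSectionVars false


lemma inner_decomp {V : Type} [NormedAddCommGroup V] [InnerProductSpace ℂ V] (u v : V) :
    (inner ℂ u v : ℂ) = (((inner ℂ u (Complex.I • v) : ℂ).im : ℝ) : ℂ) + (inner ℂ u v : ℂ).im * Complex.I := by
  have h : (inner ℂ u (Complex.I • v) : ℂ) = Complex.I * inner ℂ u v := inner_smul_right u v Complex.I
  rw [h]
  set z : ℂ := inner ℂ u v
  have : (Complex.I * z).im = z.re := by simp
  rw [this]
  exact (Complex.re_add_im z).symm

lemma adj_aux {V : Type} [NormedAddCommGroup V] [InnerProductSpace ℂ V]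
    (g : V ≃L[ℝ] V)
    (hg : ∀ x y : V, (inner ℂ (g x) (g y) : ℂ).im = (inner ℂ x y : ℂ).im)
    (a b : V) :
    (inner ℂ ((2 : ℝ)⁻¹ • (g a - Complex.I • g (Complex.I • a))) b : ℂ) =
      inner ℂ a ((2 : ℝ)⁻¹ • (g.symm b - Complex.I • g.symm (Complex.I • b))) := by
  have hsI : ∀ u v : V, (inner ℂ u (Complex.I • v) : ℂ).im = - (inner ℂ (Complex.I • u) v : ℂ).im := by
    intro u v
    rw [inner_smul_right, inner_smul_left]
    simp
  have hsg : ∀ u w : V, (inner ℂ u (g.symm w) : ℂ).im = (inner ℂ (g u) w : ℂ).im := by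
    intro u w
    have := hg u (g.symm w)
    rw [g.apply_symm_apply] at this
    exact this.symm
  set A1 := (inner ℂ (g a) b : ℂ).im with hA1
  set A2 := (inner ℂ (g a) (Complex.I • b) : ℂ).im with hA2
  set A3 := (inner ℂ (g (Complex.I • a)) b : ℂ).im with hA3
  set A4 := (inner ℂ (g (Complex.I • a)) (Complex.I • b) : ℂ).im with hA4
  have e3 : (inner ℂ (g a) b : ℂ) = (A2 : ℝ) + (A1 : ℂ) * Complex.I := by
    rw [inner_decomp (g a) b]
  have e4 : (inner ℂ (g (Complex.I • a)) b : ℂ) = (A4 : ℝ) + (A3 : ℂ) * Complex.I := by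
    rw [inner_decomp (g (Complex.I • a)) b]
  have e1 : (inner ℂ a (g.symm b) : ℂ) = (-A3 : ℝ) + (A1 : ℂ) * Complex.I := by
    rw [inner_decomp a (g.symm b)]
    rw [hsI a (g.symm b), hsg (Complex.I • a) b, hsg a b]
  have e2 : (inner ℂ a (g.symm (Complex.I • b)) : ℂ) = (-A4 : ℝ) + (A2 : ℂ) * Complex.I := by
    rw [inner_decomp a (g.symm (Complex.I • b))]
    rw [hsI a (g.symm (Complex.I • b)), hsg (Complex.I • a) (Complex.I • b),
      hsg a (Complex.I • b)]
  rw [RCLike.real_smul_eq_coe_smul (K := ℂ), RCLike.real_smul_eq_coe_smul (K := ℂ) ((2:ℝ)⁻¹)]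
  rw [inner_smul_left, inner_smul_right, inner_sub_left, inner_sub_right,
    inner_smul_left, inner_smul_right, e3, e4, e1, e2, Complex.conj_I]
  rw [RCLike.conj_ofReal]
  push_cast
  ring_nf
  rw [Complex.I_sq]
  ring

section Aux
variable {W AC : Type} [CommRing AC] [Algebra ℂ AC]

lemma mk_pow_expand (gen : W → AC) (a b : W) (k : ℕ) :
    (gen a + gen b) ^ k = ∑ t : Fin k → Bool, ∏ i, gen (cond (t i) a b) := by
  have h1 : gen a + gen b = ∑ j : Bool, gen (cond j a b) := by
    rw [Fintype.sum_bool]; rfl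
  calc (gen a + gen b) ^ k = ∏ _i : Fin k, (∑ j : Bool, gen (cond j a b)) := by
        rw [Finset.prod_const, ← h1, Finset.card_univ, Fintype.card_fin]
    _ = ∑ t ∈ Fintype.piFinset (fun _ : Fin k => (Finset.univ : Finset Bool)),
          ∏ i, gen (cond (t i) a b) := Finset.prod_univ_sum _ _
    _ = _ := by rw [Fintype.piFinset_univ]

lemma mk_pow_mem_grade (gen : W → AC) (a b : W) (k : ℕ) :
    (gen a + gen b) ^ k ∈ GradeOf gen k := by
  rw [mk_pow_expand]
  exact Submodule.sum_mem _ fun t _ =>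
    Submodule.subset_span ⟨fun i => cond (t i) a b, rfl⟩

lemma mk_gauss_factor {σ : Type} [Fintype σ] [DecidableEq σ] (gen : W → AC) (a b : W) :
    ∑ u : σ → Bool, ∏ j : σ, gen (cond (u j) a b) = (gen a + gen b) ^ (Fintype.card σ) := by
  rw [← Fintype.piFinset_univ,
    ← Finset.prod_univ_sum (fun _ : σ => (Finset.univ : Finset Bool))
      (fun _ c => gen (cond c a b))]
  rw [Finset.prod_const, Finset.card_univ]
  congr 1
  rw [Fintype.sum_bool]; rfl

lemma mk_split_sum (gen : W → AC) (a b : W) (k : ℕ) (S : Finset (Fin k))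
    (Φ Ψ : AC →ₗ⋆[ℂ] ℂ) :
    ∑ t : Fin k → Bool,
        Φ (∏ i ∈ S, gen (cond (t i) a b)) * Ψ (∏ i ∈ Sᶜ, gen (cond (t i) a b)) =
      Φ ((gen a + gen b) ^ S.card) * Ψ ((gen a + gen b) ^ Sᶜ.card) := by
  classical
  set e := Equiv.piEquivPiSubtypeProd (fun i : Fin k => i ∈ S) (fun _ => Bool) with he
  rw [← Equiv.sum_comp e.symm
    (fun t => Φ (∏ i ∈ S, gen (cond (t i) a b)) * Ψ (∏ i ∈ Sᶜ, gen (cond (t i) a b)))]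
  rw [Fintype.sum_prod_type]
  have hfst : ∀ (u : {i : Fin k // i ∈ S} → Bool) (v : {i : Fin k // ¬ i ∈ S} → Bool),
      ∏ i ∈ S, gen (cond ((e.symm (u, v)) i) a b) =
        ∏ j : {i : Fin k // i ∈ S}, gen (cond (u j) a b) := by
    intro u v
    rw [Finset.univ_eq_attach]
    rw [← Finset.prod_attach S (fun i => gen (cond ((e.symm (u, v)) i) a b))]
    refine Finset.prod_congr rfl fun j _ => ?_
    rw [he, Equiv.piEquivPiSubtypeProd_symm_apply, dif_pos j.2]
  have hsnd : ∀ (u : {i : Fin k // i ∈ S} → Bool) (v : {i : Fin k // ¬ i ∈ S} → Bool),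
      ∏ i ∈ Sᶜ, gen (cond ((e.symm (u, v)) i) a b) =
        ∏ j : {i : Fin k // ¬ i ∈ S}, gen (cond (v j) a b) := by
    intro u v
    rw [← Finset.prod_attach Sᶜ (fun i => gen (cond ((e.symm (u, v)) i) a b))]
    have h1 : ∀ j : {i : Fin k // i ∈ Sᶜ},
        gen (cond ((e.symm (u, v)) ↑j) a b) =
          gen (cond (v ⟨↑j, Finset.mem_compl.mp j.2⟩) a b) := by
      intro j
      rw [he, Equiv.piEquivPiSubtypeProd_symm_apply, dif_neg (Finset.mem_compl.mp j.2)]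
    rw [← Finset.univ_eq_attach, Finset.prod_congr rfl (fun j _ => h1 j)]
    exact Fintype.prod_equiv (Equiv.subtypeEquivRight (fun i => Finset.mem_compl))
      _ _ (fun j => rfl)
  calc ∑ u : {i : Fin k // i ∈ S} → Bool, ∑ v : {i : Fin k // ¬ i ∈ S} → Bool,
          Φ (∏ i ∈ S, gen (cond ((e.symm (u, v)) i) a b)) *
          Ψ (∏ i ∈ Sᶜ, gen (cond ((e.symm (u, v)) i) a b))
      = ∑ u : {i : Fin k // i ∈ S} → Bool, ∑ v : {i : Fin k // ¬ i ∈ S} → Bool,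
          Φ (∏ j : {i : Fin k // i ∈ S}, gen (cond (u j) a b)) *
          Ψ (∏ j : {i : Fin k // ¬ i ∈ S}, gen (cond (v j) a b)) := by
        refine Finset.sum_congr rfl fun u _ => Finset.sum_congr rfl fun v _ => ?_
        rw [hfst u v, hsnd u v]
    _ = (∑ u : {i : Fin k // i ∈ S} → Bool,
            Φ (∏ j : {i : Fin k // i ∈ S}, gen (cond (u j) a b))) *
          (∑ v : {i : Fin k // ¬ i ∈ S} → Bool,
            Ψ (∏ j : {i : Fin k // ¬ i ∈ S}, gen (cond (v j) a b))) := by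
        rw [Finset.sum_mul_sum]
    _ = _ := by
        rw [← map_sum Φ, ← map_sum Ψ, mk_gauss_factor, mk_gauss_factor,
          Fintype.card_coe, Fintype.card_subtype_compl, Fintype.card_coe,
          Finset.card_compl, Fintype.card_fin]


lemma mk_mulB (gen : W → AC) (a b : W)
    (mulC : (AC →ₗ⋆[ℂ] ℂ) → (AC →ₗ⋆[ℂ] ℂ) → (AC →ₗ⋆[ℂ] ℂ))
    (hmulC : IsConvProdOf gen mulC) (Φ Ψ : AC →ₗ⋆[ℂ] ℂ) (k : ℕ) :
    mulC Φ Ψ ((gen a + gen b) ^ k) =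
      ∑ j ∈ Finset.range (k + 1), (k.choose j) •
        (Φ ((gen a + gen b) ^ j) * Ψ ((gen a + gen b) ^ (k - j))) := by
  classical
  have h1 : ∀ t : Fin k → Bool,
      mulC Φ Ψ (∏ i, gen (cond (t i) a b)) =
        ∑ S : Finset (Fin k), Φ (∏ i ∈ S, gen (cond (t i) a b)) *
          Ψ (∏ i ∈ Sᶜ, gen (cond (t i) a b)) :=
    fun t => hmulC Φ Ψ k (fun i => cond (t i) a b)
  rw [mk_pow_expand, map_sum, Finset.sum_congr rfl (fun t _ => h1 t), Finset.sum_comm]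
  have h2 : ∀ S : Finset (Fin k),
      ∑ t : Fin k → Bool, Φ (∏ i ∈ S, gen (cond (t i) a b)) *
          Ψ (∏ i ∈ Sᶜ, gen (cond (t i) a b)) =
        Φ ((gen a + gen b) ^ S.card) * Ψ ((gen a + gen b) ^ (k - S.card)) := by
    intro S
    rw [mk_split_sum, Finset.card_compl, Fintype.card_fin]
  rw [Finset.sum_congr rfl (fun S _ => h2 S)]
  rw [← Finset.powerset_univ, Finset.sum_powerset]
  have h3 : (Finset.univ : Finset (Fin k)).card = k := by
    rw [Finset.card_univ, Fintype.card_fin]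
  rw [h3]
  refine Finset.sum_congr rfl fun j _ => ?_
  have := Finset.sum_powersetCard j (Finset.univ : Finset (Fin k))
    (fun c => Φ ((gen a + gen b) ^ c) * Ψ ((gen a + gen b) ^ (k - c)))
  rw [this, h3]

lemma mk_eps_pow (gen : W → AC) (a b : W) (εC : AC →ₗ⋆[ℂ] ℂ)
    (hεC : IsCounitOf gen εC) (k : ℕ) :
    εC ((gen a + gen b) ^ k) = if k = 0 then 1 else 0 := by
  have h1 : ∀ t : Fin k → Bool,
      εC (∏ i, gen (cond (t i) a b)) = if k = 0 then 1 else 0 :=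
    fun t => hεC k (fun i => cond (t i) a b)
  rw [mk_pow_expand, map_sum, Finset.sum_congr rfl (fun t _ => h1 t), Finset.sum_const]
  cases k with
  | zero => simp
  | succ n => simp

lemma mk_zeta_pow (gen : W → AC) (a b : W) (ζ : AC →ₗ⋆[ℂ] ℂ)
    (hζ : IsQuadOf gen ζ) (j : ℕ) (hj : j ≠ 2) :
    ζ ((gen a + gen b) ^ j) = 0 :=
  hζ j hj _ (mk_pow_mem_grade gen a b j)

lemma mk_powD_pow (gen : W → AC) (a b : W)
    (mulC : (AC →ₗ⋆[ℂ] ℂ) → (AC →ₗ⋆[ℂ] ℂ) → (AC →ₗ⋆[ℂ] ℂ))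
    (hmulC : IsConvProdOf gen mulC) (εC : AC →ₗ⋆[ℂ] ℂ) (hεC : IsCounitOf gen εC)
    (ζ : AC →ₗ⋆[ℂ] ℂ) (hζ : IsQuadOf gen ζ) :
    ∀ n k : ℕ, powD mulC εC ζ n ((gen a + gen b) ^ k) =
      if k = 2 * n then ((2 * n).factorial : ℂ) / 2 ^ n * (ζ ((gen a + gen b) ^ 2)) ^ n
      else 0 := by
  intro n
  induction n with
  | zero =>
    intro k
    rw [show powD mulC εC ζ 0 = εC from rfl, mk_eps_pow gen a b εC hεC]
    simp
  | succ n ih =>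
    intro k
    rw [show powD mulC εC ζ (n+1) = mulC ζ (powD mulC εC ζ n) from rfl,
      mk_mulB gen a b mulC hmulC]
    have h1 : ∀ j ∈ Finset.range (k + 1), j ≠ 2 →
        (k.choose j) • (ζ ((gen a + gen b) ^ j) *
          powD mulC εC ζ n ((gen a + gen b) ^ (k - j))) = 0 := by
      intro j _ hj
      rw [mk_zeta_pow gen a b ζ hζ j hj, zero_mul, smul_zero]
    have h2 : 2 ∉ Finset.range (k + 1) →
        (k.choose 2) • (ζ ((gen a + gen b) ^ 2) *
          powD mulC εC ζ n ((gen a + gen b) ^ (k - 2))) = 0 := by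
      intro h2
      have : k < 2 := by
        simp only [Finset.mem_range] at h2; omega
      rw [Nat.choose_eq_zero_of_lt this, zero_smul]
    rw [Finset.sum_eq_single 2 h1 h2, ih (k - 2)]
    set c : ℂ := ζ ((gen a + gen b) ^ 2) with hc
    by_cases hk : k = 2 * n + 2
    · subst hk
      rw [if_pos (by omega), if_pos (by ring)]
      have hch : (2 * n + 2).choose 2 = (n + 1) * (2 * n + 1) := by
        rw [Nat.choose_two_right]
        have h' : 2 * n + 2 - 1 = 2 * n + 1 := by omega
        rw [h']
        have h'' : (2 * n + 2) * (2 * n + 1) = ((n + 1) * (2 * n + 1)) * 2 := by ring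
        rw [h'', Nat.mul_div_cancel _ (by norm_num)]
      have hfac : ((2 * (n + 1)).factorial : ℂ) =
          (2 * n + 2) * ((2 * n + 1) * ((2 * n).factorial : ℂ)) := by
        have h : 2 * (n + 1) = (2 * n + 1) + 1 := by ring
        rw [h, Nat.factorial_succ, Nat.factorial_succ]
        push_cast; ring
      rw [hch, nsmul_eq_mul, hfac]
      have h2n : (2 : ℂ) ^ n ≠ 0 := pow_ne_zero n two_ne_zero
      push_cast
      field_simp
      ring
    · have hrhs : ¬ k = 2 * (n + 1) := by omega
      rcases Nat.lt_or_ge k 2 with h | h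
      · rw [Nat.choose_eq_zero_of_lt h, zero_smul, if_neg hrhs]
      · rw [if_neg (show ¬ k - 2 = 2 * n by omega), mul_zero, smul_zero, if_neg hrhs]

lemma mk_E_pow_even (gen : W → AC) (a b : W)
    (mulC : (AC →ₗ⋆[ℂ] ℂ) → (AC →ₗ⋆[ℂ] ℂ) → (AC →ₗ⋆[ℂ] ℂ))
    (hmulC : IsConvProdOf gen mulC) (εC : AC →ₗ⋆[ℂ] ℂ) (hεC : IsCounitOf gen εC)
    (ζ : AC →ₗ⋆[ℂ] ℂ) (hζ : IsQuadOf gen ζ)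
    (E : AC →ₗ⋆[ℂ] ℂ) (hE : IsGaussianOf gen mulC εC ζ E) (m : ℕ) :
    E ((gen a + gen b) ^ (2 * m)) =
      ((m.factorial : ℂ))⁻¹ * (((2 * m).factorial : ℂ) / 2 ^ m *
        (ζ ((gen a + gen b) ^ 2)) ^ m) := by
  rw [hE (2 * m) _ (mk_pow_mem_grade gen a b (2 * m))]
  have h1 : ∀ n ∈ Finset.range (2 * m + 1), n ≠ m →
      ((n.factorial : ℂ))⁻¹ * powD mulC εC ζ n ((gen a + gen b) ^ (2 * m)) = 0 := by
    intro n _ hn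
    rw [mk_powD_pow gen a b mulC hmulC εC hεC ζ hζ, if_neg (by omega), mul_zero]
  rw [Finset.sum_eq_single m h1 (fun hm => absurd (Finset.mem_range.mpr (by omega)) hm)]
  rw [mk_powD_pow gen a b mulC hmulC εC hεC ζ hζ, if_pos rfl]

lemma mk_E_pow_odd (gen : W → AC) (a b : W)
    (mulC : (AC →ₗ⋆[ℂ] ℂ) → (AC →ₗ⋆[ℂ] ℂ) → (AC →ₗ⋆[ℂ] ℂ))
    (hmulC : IsConvProdOf gen mulC) (εC : AC →ₗ⋆[ℂ] ℂ) (hεC : IsCounitOf gen εC)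
    (ζ : AC →ₗ⋆[ℂ] ℂ) (hζ : IsQuadOf gen ζ)
    (E : AC →ₗ⋆[ℂ] ℂ) (hE : IsGaussianOf gen mulC εC ζ E) (k : ℕ)
    (hk : ∀ m : ℕ, k ≠ 2 * m) :
    E ((gen a + gen b) ^ k) = 0 := by
  rw [hE k _ (mk_pow_mem_grade gen a b k)]
  refine Finset.sum_eq_zero fun n _ => ?_
  rw [mk_powD_pow gen a b mulC hmulC εC hεC ζ hζ, if_neg (hk n), mul_zero]

lemma mk_hasSum (gen : W → AC) (a b : W)
    (mulC : (AC →ₗ⋆[ℂ] ℂ) → (AC →ₗ⋆[ℂ] ℂ) → (AC →ₗ⋆[ℂ] ℂ))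
    (hmulC : IsConvProdOf gen mulC) (εC : AC →ₗ⋆[ℂ] ℂ) (hεC : IsCounitOf gen εC)
    (ζ : AC →ₗ⋆[ℂ] ℂ) (hζ : IsQuadOf gen ζ)
    (E : AC →ₗ⋆[ℂ] ℂ) (hE : IsGaussianOf gen mulC εC ζ E) :
    HasSum (fun k : ℕ => ((k.factorial : ℂ))⁻¹ * E ((gen a + gen b) ^ k))
      (Complex.exp ((2 : ℂ)⁻¹ * ζ ((gen a + gen b) ^ 2))) := by
  set c : ℂ := ζ ((gen a + gen b) ^ 2) with hc
  have hterm : ∀ m : ℕ,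
      (((2 * m).factorial : ℂ))⁻¹ * E ((gen a + gen b) ^ (2 * m)) =
        ((2 : ℂ)⁻¹ * c) ^ m / (m.factorial : ℂ) := by
    intro m
    rw [mk_E_pow_even gen a b mulC hmulC εC hεC ζ hζ E hE m, ← hc]
    have h1 : ((2 * m).factorial : ℂ) ≠ 0 := Nat.cast_ne_zero.mpr (Nat.factorial_ne_zero _)
    have h2 : ((m.factorial : ℂ)) ≠ 0 := Nat.cast_ne_zero.mpr (Nat.factorial_ne_zero _)
    field_simp
    try ring
    try tauto
    rw [mul_assoc, ← mul_pow]; norm_num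
  have hexp : HasSum (fun m : ℕ => ((2 : ℂ)⁻¹ * c) ^ m / (m.factorial : ℂ))
      (Complex.exp ((2 : ℂ)⁻¹ * c)) := by
    rw [Complex.exp_eq_exp_ℂ]
    exact NormedSpace.expSeries_div_hasSum_exp _
  refine (Function.Injective.hasSum_iff (g := fun m : ℕ => 2 * m)
    (fun s t h => by dsimp at h; omega) ?_).mp ?_
  · intro k hk
    have hodd : ∀ m : ℕ, k ≠ 2 * m := by
      intro m hm
      exact hk ⟨m, hm.symm⟩
    rw [mk_E_pow_odd gen a b mulC hmulC εC hεC ζ hζ E hE k hodd, mul_zero]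
  · have : (fun k : ℕ => ((k.factorial : ℂ))⁻¹ * E ((gen a + gen b) ^ k)) ∘
        (fun m : ℕ => 2 * m) = fun m : ℕ => ((2 : ℂ)⁻¹ * c) ^ m / (m.factorial : ℂ) := by
      funext m
      exact hterm m
    rw [this]
    exact hexp

end Aux

/-- The metaplectic kernel formula.  With `u_g = e^Z` the metaplectic kernel of
`g ∈ Sp(V)` and `ζ_Z` the quadratic of `Z` (so `ζ_Z(w²) = ⟨w|Zw⟩`), for `x, y ∈ V`:
`⟨(x₊+y₋)|Z(x₊+y₋)⟩ = 2⟨C_g⁻¹x|y⟩ + ⟨x|Z_{g⁻¹}x⟩ + ⟨Z_g y|y⟩`, and consequently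
`u_g((eˣ)₊(eʸ)₋) = exp(½{2⟨C_g⁻¹x|y⟩ + ⟨x|Z_{g⁻¹}x⟩ + ⟨Z_g y|y⟩})`, the
left-hand side being the sum of the series `Σₖ (k!)⁻¹ e^Z((x₊+y₋)ᵏ)`. -/
theorem metaplectic_kernel_formula {V A AC : Type}
    [NormedAddCommGroup V] [InnerProductSpace ℂ V] [CompleteSpace V]
    [CommRing A] [Algebra ℂ A] [CommRing AC] [Algebra ℂ AC]
    (ι : V →ₗ[ℂ] A) (hA : IsSymmAlg ι) (hspan : SpanProdsOf fun w => ι w)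
    (p : A →ₐ[ℂ] AC) (m : A → AC) (hm : IsAntiAlgHom m)
    (gen : V ⊕ V → AC)
    (hgen : ∀ w : V ⊕ V, gen w = Sum.elim (fun v => p (ι v)) (fun v => m (ι v)) w)
    (hspanC : SpanProdsOf gen)
    (mulC : (AC →ₗ⋆[ℂ] ℂ) → (AC →ₗ⋆[ℂ] ℂ) → (AC →ₗ⋆[ℂ] ℂ))
    (hmulC : IsConvProdOf gen mulC)
    (εC : AC →ₗ⋆[ℂ] ℂ) (hεC : IsCounitOf gen εC)
    (g : V ≃L[ℝ] V)
    (hg : ∀ x y : V, (inner ℂ (g x) (g y) : ℂ).im = (inner ℂ x y : ℂ).im)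
    (Cg Ag Cg' Ag' Zg Zg' Cginv Cg'inv : V → V)
    (hCg : ∀ x : V, Cg x = (2 : ℝ)⁻¹ • (g x - Complex.I • g (Complex.I • x)))
    (hAg : ∀ x : V, Ag x = (2 : ℝ)⁻¹ • (g x + Complex.I • g (Complex.I • x)))
    (hCg' : ∀ x : V, Cg' x = (2 : ℝ)⁻¹ • (g.symm x - Complex.I • g.symm (Complex.I • x)))
    (hAg' : ∀ x : V, Ag' x = (2 : ℝ)⁻¹ • (g.symm x + Complex.I • g.symm (Complex.I • x)))
    (hZg : ∀ x : V, Cg (Zg x) = Ag x)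
    (hZg' : ∀ x : V, Cg' (Zg' x) = Ag' x)
    (hCginv : ∀ x : V, Cg (Cginv x) = x ∧ Cginv (Cg x) = x)
    (hCg'inv : ∀ x : V, Cg' (Cg'inv x) = x ∧ Cg'inv (Cg' x) = x)
    (ζZ : AC →ₗ⋆[ℂ] ℂ) (hζq : IsQuadOf gen ζZ)
    (hζpp : ∀ x y : V, ζZ (p (ι x) * p (ι y)) = (inner ℂ x (Zg' y) : ℂ))
    (hζpm : ∀ x y : V, ζZ (p (ι x) * m (ι y)) = (inner ℂ x (Cg'inv y) : ℂ))
    (hζmm : ∀ x y : V, ζZ (m (ι x) * m (ι y)) = (inner ℂ (Zg y) x : ℂ))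
    (E : AC →ₗ⋆[ℂ] ℂ) (hE : IsGaussianOf gen mulC εC ζZ E) :
    ∀ x y : V,
      -- ⟨(x₊+y₋)|Z(x₊+y₋)⟩ = 2⟨C_g⁻¹x|y⟩ + ⟨x|Z_{g⁻¹}x⟩ + ⟨Z_g y|y⟩
      ζZ ((p (ι x) + m (ι y)) ^ 2) =
        2 * (inner ℂ (Cginv x) y : ℂ) + (inner ℂ x (Zg' x) : ℂ) + (inner ℂ (Zg y) y : ℂ) ∧
      -- u_g((eˣ)₊(eʸ)₋) = exp(½{2⟨C_g⁻¹x|y⟩ + ⟨x|Z_{g⁻¹}x⟩ + ⟨Z_g y|y⟩})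
      HasSum (fun k : ℕ => ((k.factorial : ℂ))⁻¹ * E ((p (ι x) + m (ι y)) ^ k))
        (Complex.exp ((2 : ℂ)⁻¹ *
          (2 * (inner ℂ (Cginv x) y : ℂ) + (inner ℂ x (Zg' x) : ℂ) + (inner ℂ (Zg y) y : ℂ)))) := by
  intro x y
  have hCC : (inner ℂ x (Cg'inv y) : ℂ) = inner ℂ (Cginv x) y := by
    have h := adj_aux g hg (Cginv x) (Cg'inv y)
    rw [← hCg (Cginv x), ← hCg' (Cg'inv y)] at h
    rw [(hCginv x).1, (hCg'inv y).1] at h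
    exact h
  have hsq : (p (ι x) + m (ι y)) ^ 2 =
      p (ι x) * p (ι x) +
        ((p (ι x) * m (ι y) + p (ι x) * m (ι y)) + m (ι y) * m (ι y)) := by
    ring
  have h1 : ζZ ((p (ι x) + m (ι y)) ^ 2) =
      2 * (inner ℂ (Cginv x) y : ℂ) + (inner ℂ x (Zg' x) : ℂ) + (inner ℂ (Zg y) y : ℂ) := by
    rw [hsq, map_add, map_add, map_add, hζpp, hζpm, hζmm, hCC]
    ring
  refine ⟨h1, ?_⟩
  rw [← h1]
  have hga : gen (Sum.inl x) = p (ι x) := by rw [hgen]; rfl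
  have hgb : gen (Sum.inr y) = m (ι y) := by rw [hgen]; rfl
  have hw : p (ι x) + m (ι y) = gen (Sum.inl x) + gen (Sum.inr y) := by rw [hga, hgb]
  rw [hw]
  exact mk_hasSum gen (Sum.inl x) (Sum.inr y) mulC hmulC εC hεC ζZ hζq E hE
end
end
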